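/- arXiv:1810.05381 — 3 statements merged into one kernel-verified Lean document; each statement's English description precedes it below -/
import Mathlib

section
/- Let P ∈ B(H) be a bounded idempotent. Then the operator P + P* + 2(I − P_{R(P)}) is unitarily equivalent to the operator 2I − P − P* + 2(I − P_{R(I−P)}), where P_{R(P)} and P_{R(I−P)} are the orthogonal projections onto the (closed) ranges of P and of I − P, respectively. -/
open ContinuousLinearMap

variable {H : Type*} [NormedAddCommGroup H] [InnerProductSpace ℂ H] [CompleteSpace H]

/-- The orthogonal projection onto a closed subspace `M`, as an operator on `H`. -/
noncomputable def oproj (M : Submodule ℂ H) (hM : IsClosed (M : Set H)) : H →L[ℂ] H :=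
  haveI : CompleteSpace M := hM.completeSpace_coe
  M.subtypeL ∘L M.orthogonalProjectionOnto

/-- The orthogonal projection onto the closure of the range of an operator. -/
noncomputable def rangeProj (A : H →L[ℂ] H) : H →L[ℂ] H :=
  oproj (LinearMap.range (A : H →ₗ[ℂ] H)).topologicalClosure (Submodule.isClosed_topologicalClosure _)

/-- The orthogonal projection onto the kernel of an operator. -/
noncomputable def kerProj (A : H →L[ℂ] H) : H →L[ℂ] H :=
  oproj (LinearMap.ker (A : H →ₗ[ℂ] H)) (ContinuousLinearMap.isClosed_ker A)

theorem range_idem_eq_ker (P : H →L[ℂ] H) (hP : P * P = P) :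
    LinearMap.range (P : H →ₗ[ℂ] H) = LinearMap.ker ((1 - P : H →L[ℂ] H) : H →ₗ[ℂ] H) := by
  ext x
  constructor
  · rintro ⟨y, rfl⟩
    have h : P (P y) = P y := by
      have := congrArg (fun T : H →L[ℂ] H => T y) hP
      simpa using this
    simp [LinearMap.mem_ker, h]
  · intro hx
    have h : x - P x = 0 := by simpa using hx
    exact ⟨x, (sub_eq_zero.mp h).symm⟩

/-- The range of a bounded idempotent is closed. -/
theorem isClosed_range_idem (P : H →L[ℂ] H) (hP : P * P = P) :
    IsClosed ((LinearMap.range (P : H →ₗ[ℂ] H) : Submodule ℂ H) : Set H) := by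
  rw [range_idem_eq_ker P hP]
  exact ContinuousLinearMap.isClosed_ker _

theorem mul_one_sub_idem (P : H →L[ℂ] H) (hP : P * P = P) :
    (1 - P) * (1 - P) = 1 - P := by
  rw [sub_mul, mul_sub, mul_sub, one_mul, mul_one, hP]
  abel

lemma my_commute_cfc (a b : H →L[ℂ] H) (ha : IsSelfAdjoint a)
    (hab : a * b = b * a) (f : ℝ → ℝ) (hf : ContinuousOn f (spectrum ℝ a)) :
    cfc f a * b = b * cfc f a := by
  rw [cfc_apply f a ha hf]
  have key : ∀ g : C(spectrum ℝ a, ℝ), Commute (cfcHom ha g) b := by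
    intro g
    induction g using ContinuousMap.induction_on_of_compact with
    | const r =>
        have h0 : (ContinuousMap.const (spectrum ℝ a) r)
            = algebraMap ℝ C(spectrum ℝ a, ℝ) r := rfl
        rw [h0, AlgHomClass.commutes]
        exact Algebra.commutes r b
    | id =>
        rw [cfcHom_id ha]; exact hab
    | star_id =>
        have h0 : star ((ContinuousMap.id ℝ).restrict (spectrum ℝ a))
            = (ContinuousMap.id ℝ).restrict (spectrum ℝ a) := by ext x; simp
        rw [h0, cfcHom_id ha]; exact hab
    | add f g hf hg => rw [map_add]; exact hf.add_left hg
    | mul f g hf hg => rw [map_mul]; exact hf.mul_left hg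
    | frequently g hg =>
        have hclosed : IsClosed {g' : C(spectrum ℝ a, ℝ) | Commute (cfcHom ha g') b} := by
          simp only [Commute, SemiconjBy]
          exact isClosed_eq ((cfcHom_continuous ha).mul continuous_const)
            (continuous_const.mul (cfcHom_continuous ha))
        exact hclosed.closure_subset hg.mem_closure
  exact key _

lemma my_isUnit_one_add (x : H →L[ℂ] H) (hx : 0 ≤ x) : IsUnit (1 + x) := by
  have h2 := spectrum_nonneg_of_nonneg (𝕜 := ℝ) hx
  have h1 : (-1 : ℝ) ∉ spectrum ℝ x := fun h => by linarith [h2 h]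
  have h3 := spectrum.notMem_iff.mp h1
  rw [map_neg, map_one] at h3
  have h4 : (-1 : H →L[ℂ] H) - x = -(1 + x) := by abel
  rw [h4, IsUnit.neg_iff] at h3
  exact h3

lemma my_isUnit_of_sq {B : Type*} [Ring B] (s : B) (h : IsUnit (s * s)) : IsUnit s := by
  obtain ⟨u, hu⟩ := h
  have hc : Commute s ↑u := by rw [hu]; exact (Commute.refl s).mul_right (Commute.refl s)
  have hc' : Commute s ↑u⁻¹ := hc.units_inv_right
  refine isUnit_iff_exists.mpr ⟨s * ↑u⁻¹, ?_, ?_⟩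
  · rw [← mul_assoc, ← hu, Units.mul_inv]
  · rw [mul_assoc, ← hc'.eq, ← mul_assoc, ← hu, Units.mul_inv]

lemma inv_comm {B : Type*} [Ring B] {z zi t : B} (h1 : z * zi = 1) (h2 : zi * z = 1)
    (h : z * t = t * z) : zi * t = t * zi := by
  calc zi * t = zi * t * (z * zi) := by rw [h1, mul_one]
    _ = zi * (t * z) * zi := by rw [← mul_assoc, mul_assoc zi t z]
    _ = zi * (z * t) * zi := by rw [h]
    _ = t * zi := by rw [← mul_assoc zi z t, h2, one_mul]

lemma inv_anticomm {B : Type*} [Ring B] {s si t : B} (h1 : s * si = 1) (h2 : si * s = 1)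
    (h : t * s = -(s * t)) : t * si = -(si * t) := by
  have h' : s * t = -(t * s) := by rw [h, neg_neg]
  calc t * si = si * (s * (t * si)) := by rw [← mul_assoc si s, h2, one_mul]
    _ = si * ((s * t) * si) := by rw [← mul_assoc s t si]
    _ = si * (-(t * s) * si) := by rw [h']
    _ = -(si * (t * (s * si))) := by rw [neg_mul, mul_neg, mul_assoc t s si]
    _ = -(si * t) := by rw [h1, mul_one]

lemma oproj_eq {M : Submodule ℂ H} (hM : IsClosed (M : Set H)) (G : H →L[ℂ] H)
    (h1 : ∀ x, G x ∈ M) (h2 : ∀ x, ∀ w ∈ M, inner (𝕜 := ℂ) (x - G x) w = 0) :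
    oproj M hM = G := by
  haveI : CompleteSpace M := hM.completeSpace_coe
  ext x
  have := Submodule.eq_starProjection_of_mem_of_inner_eq_zero (K := M) (u := x) (h1 x) (h2 x)
  exact this

set_option maxHeartbeats 1000000 in
/-- `P + P* + 2(I − P_{R(P)})` is unitarily equivalent to
`2I − P − P* + 2(I − P_{R(I−P)})`. -/
theorem unitarily_equiv_sum_proj (P : H →L[ℂ] H) (hP : P * P = P) :
    ∃ U ∈ unitary (H →L[ℂ] H),
      P + adjoint P + 2 • (1 - oproj (LinearMap.range (P : H →ₗ[ℂ] H)) (isClosed_range_idem P hP)) =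
        adjoint U *
          (2 - P - adjoint P +
            2 • (1 - oproj (LinearMap.range ((1 - P : H →L[ℂ] H) : H →ₗ[ℂ] H))
                  (isClosed_range_idem (1 - P) (mul_one_sub_idem P hP)))) * U := by
  have hPd : star P * star P = star P := by rw [← star_mul, hP]
  set S : H →L[ℂ] H := P + star P - 1 with hSdef
  set T : H →L[ℂ] H := P - star P with hTdef
  have h1 : S * S = 1 - T * T := by
    simp only [hSdef, hTdef, mul_sub, sub_mul, mul_add, add_mul, mul_one, one_mul, hP, hPd]
    abel
  have hTS : T * S = -(S * T) := by
    simp only [hSdef, hTdef, mul_sub, sub_mul, mul_add, add_mul, mul_one, one_mul, hP, hPd]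
    abel
  have hstarS : star S = S := by
    simp only [hSdef, star_sub, star_add, star_one, star_star]; abel
  have hstarT : star T = -T := by
    simp only [hTdef, star_sub, star_star]; abel
  have hSSunit : IsUnit (S * S) := by
    have hSS : S * S = 1 + T * star T := by rw [h1, hstarT, mul_neg]; abel
    rw [hSS]
    exact my_isUnit_one_add _ (mul_star_self_nonneg T)
  obtain ⟨v, hv⟩ := my_isUnit_of_sq S hSSunit
  set Si : H →L[ℂ] H := ((v⁻¹ : (H →L[ℂ] H)ˣ) : H →L[ℂ] H) with hSidef
  have hSi : S * Si = 1 := by rw [hSidef, ← hv]; exact v.mul_inv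
  have hiS : Si * S = 1 := by rw [hSidef, ← hv]; exact v.inv_mul
  have hstarSi : star Si = Si := by
    have e : star Si * S = 1 := by
      conv_lhs => rw [← hstarS, ← star_mul, hSi, star_one]
    calc star Si = star Si * (S * Si) := by rw [hSi, mul_one]
      _ = (star Si * S) * Si := by rw [mul_assoc]
      _ = Si := by rw [e, one_mul]
  have hTSi : T * Si = -(Si * T) := inv_anticomm hSi hiS hTS
  -- square root of S*S
  have hSSsa : IsSelfAdjoint (S * S) := by
    have : star (S * S) = S * S := by rw [star_mul, hstarS]
    exact this
  have hSSnn : (0 : H →L[ℂ] H) ≤ S * S := by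
    have hSS : S * S = 1 + T * star T := by rw [h1, hstarT, mul_neg]; abel
    rw [hSS]
    calc (0 : H →L[ℂ] H) = 0 + 0 := by rw [add_zero]
      _ ≤ 1 + T * star T := add_le_add zero_le_one (mul_star_self_nonneg T)
  set Z : H →L[ℂ] H := cfc Real.sqrt (S * S) with hZdef
  have hsqrtcont : ContinuousOn Real.sqrt (spectrum ℝ (S * S)) :=
    Real.continuous_sqrt.continuousOn
  have hZZ : Z * Z = S * S := by
    rw [hZdef, ← cfc_mul _ _ (S * S)]
    calc cfc (fun x => Real.sqrt x * Real.sqrt x) (S * S)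
        = cfc (fun x : ℝ => x) (S * S) := by
          apply cfc_congr
          intro x hx
          exact Real.mul_self_sqrt (spectrum_nonneg_of_nonneg hSSnn hx)
      _ = S * S := cfc_id ℝ (S * S)
  have hZsa : IsSelfAdjoint Z := cfc_predicate _ _
  have hTSS : T * (S * S) = (S * S) * T := by
    rw [← mul_assoc, hTS, neg_mul, mul_assoc, hTS, mul_neg, neg_neg, ← mul_assoc]
  have hZT : Z * T = T * Z := my_commute_cfc (S * S) T hSSsa hTSS.symm Real.sqrt hsqrtcont
  have hZS : Z * S = S * Z := my_commute_cfc (S * S) S hSSsa (mul_assoc S S S) Real.sqrt hsqrtcont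
  obtain ⟨w, hw⟩ := my_isUnit_of_sq Z (by rw [hZZ]; exact hSSunit)
  set Zi : H →L[ℂ] H := ((w⁻¹ : (H →L[ℂ] H)ˣ) : H →L[ℂ] H) with hZidef
  have hZi : Z * Zi = 1 := by rw [hZidef, ← hw]; exact w.mul_inv
  have hiZ : Zi * Z = 1 := by rw [hZidef, ← hw]; exact w.inv_mul
  have hstarZi : star Zi = Zi := by
    have e : star Zi * Z = 1 := by
      conv_lhs => rw [← hZsa.star_eq, ← star_mul, hZi, star_one]
    calc star Zi = star Zi * (Z * Zi) := by rw [hZi, mul_one]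
      _ = (star Zi * Z) * Zi := by rw [mul_assoc]
      _ = Zi := by rw [e, one_mul]
  have hZiT : Zi * T = T * Zi := inv_comm hZi hiZ hZT
  have hZiS : Zi * S = S * Zi := inv_comm hZi hiZ hZS
  have hSiZ : Si * Z = Z * Si := inv_comm hSi hiS hZS.symm
  have hZiSi : Zi * Si = Si * Zi := inv_comm hZi hiZ hSiZ.symm
  -- inverses of S*S
  have hSiSi1 : (S * S) * (Si * Si) = 1 := by
    rw [mul_assoc S S (Si * Si), ← mul_assoc S Si Si, hSi, one_mul, hSi]
  have h5 : (Si * Si) * (S * S) = 1 := by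
    rw [mul_assoc Si Si (S * S), ← mul_assoc Si S S, hiS, one_mul, hiS]
  have hZZZiZi : (Z * Z) * (Zi * Zi) = 1 := by
    rw [mul_assoc Z Z (Zi * Zi), ← mul_assoc Z Zi Zi, hZi, one_mul, hZi]
  have hZiZi : Zi * Zi = Si * Si := by
    calc Zi * Zi = ((Si * Si) * (S * S)) * (Zi * Zi) := by rw [h5, one_mul]
      _ = (Si * Si) * ((Z * Z) * (Zi * Zi)) := by rw [mul_assoc, hZZ]
      _ = Si * Si := by rw [hZZZiZi, mul_one]
  have hSiSiT : (Si * Si) * T = T * (Si * Si) := inv_comm hSiSi1 h5 hTSS.symm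
  -- (1+T)(1-T) = S*S and (1-T)(1+T) = S*S
  have h6 : (1 + T) * (1 - T) = S * S := by
    rw [h1]
    simp only [add_mul, mul_sub, mul_one, one_mul]
    abel
  have h6' : (1 - T) * (1 + T) = S * S := by
    rw [h1]
    simp only [sub_mul, mul_add, mul_one, one_mul]
    abel
  -- identification of the projections
  have hE : oproj (LinearMap.range (P : H →ₗ[ℂ] H)) (isClosed_range_idem P hP) = P * Si := by
    apply oproj_eq
    · intro x
      exact ⟨Si x, by simp [mul_apply]⟩
    · intro x w hw
      obtain ⟨z, rfl⟩ := hw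
      have e1 : star P * S = star P * P := by
        simp only [hSdef, mul_add, mul_sub, mul_one, hPd]; abel
      have hkey : star P * (1 - P * Si) = 0 := by
        calc star P * (1 - P * Si) = star P - (star P * P) * Si := by
              rw [mul_sub, mul_one, ← mul_assoc]
          _ = star P - (star P * S) * Si := by rw [e1]
          _ = star P - star P * (S * Si) := by rw [mul_assoc]
          _ = 0 := by rw [hSi, mul_one, sub_self]
      have hv0 : star P (x - (P * Si) x) = 0 := by
        have := congrArg (fun (A : H →L[ℂ] H) => A x) hkey
        simpa [mul_apply] using this
      calc inner (𝕜 := ℂ) (x - (P * Si) x) (P z)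
          = inner (𝕜 := ℂ) (adjoint P (x - (P * Si) x)) z := (adjoint_inner_left P _ _).symm
        _ = 0 := by rw [← star_eq_adjoint, hv0, inner_zero_left]
  have hF : oproj (LinearMap.range ((1 - P : H →L[ℂ] H) : H →ₗ[ℂ] H))
      (isClosed_range_idem (1 - P) (mul_one_sub_idem P hP)) = (P - 1) * Si := by
    apply oproj_eq
    · intro x
      refine ⟨-(Si x), ?_⟩
      simp only [ContinuousLinearMap.coe_coe, ContinuousLinearMap.mul_apply, ContinuousLinearMap.sub_apply,
        ContinuousLinearMap.one_apply, map_neg]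
      abel
    · intro x w hw
      obtain ⟨z, rfl⟩ := hw
      have e2 : (1 - star P) * S = (1 - star P) * (P - 1) := by
        simp only [hSdef, sub_mul, mul_sub, mul_add, mul_one, one_mul, hPd]
        abel
      have hkey : (1 - star P) * (1 - (P - 1) * Si) = 0 := by
        calc (1 - star P) * (1 - (P - 1) * Si)
            = (1 - star P) - ((1 - star P) * (P - 1)) * Si := by
              rw [mul_sub, mul_one, ← mul_assoc]
          _ = (1 - star P) - ((1 - star P) * S) * Si := by rw [e2]
          _ = (1 - star P) - (1 - star P) * (S * Si) := by rw [mul_assoc]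
          _ = 0 := by rw [hSi, mul_one, sub_self]
      have hv0 : (star (1 - P)) (x - ((P - 1) * Si) x) = 0 := by
        have h7 : star (1 - P) = 1 - star P := by rw [star_sub, star_one]
        have := congrArg (fun (A : H →L[ℂ] H) => A x) hkey
        rw [h7]
        simpa [mul_apply] using this
      calc inner (𝕜 := ℂ) (x - ((P - 1) * Si) x) ((1 - P) z)
          = inner (𝕜 := ℂ) (adjoint (1 - P) (x - ((P - 1) * Si) x)) z :=
            (adjoint_inner_left (1 - P) _ _).symm
        _ = 0 := by rw [← star_eq_adjoint, hv0, inner_zero_left]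
  -- unitarity facts
  have hstarU : star (Zi * (1 - T)) = (1 + T) * Zi := by
    rw [star_mul, star_sub, star_one, hstarT, hstarZi, sub_neg_eq_add]
  have hU1 : ((1 + T) * Zi) * (Zi * (1 - T)) = 1 := by
    calc ((1 + T) * Zi) * (Zi * (1 - T)) = (1 + T) * ((Zi * Zi) * (1 - T)) := by
          rw [mul_assoc, ← mul_assoc Zi Zi]
      _ = (1 + T) * ((Si * Si) * (1 - T)) := by rw [hZiZi]
      _ = (1 + T) * ((1 - T) * (Si * Si)) := by
          rw [mul_sub, sub_mul, mul_one, one_mul, hSiSiT]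
      _ = ((1 + T) * (1 - T)) * (Si * Si) := by rw [mul_assoc]
      _ = 1 := by rw [h6, hSiSi1]
  have hU2 : (Zi * (1 - T)) * ((1 + T) * Zi) = 1 := by
    calc (Zi * (1 - T)) * ((1 + T) * Zi) = Zi * ((1 - T) * ((1 + T) * Zi)) := by rw [mul_assoc]
      _ = Zi * (((1 - T) * (1 + T)) * Zi) := by rw [← mul_assoc (1 - T)]
      _ = Zi * ((Z * Z) * Zi) := by rw [h6', ← hZZ]
      _ = (Zi * Z) * (Z * Zi) := by rw [mul_assoc Z Z Zi, ← mul_assoc]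
      _ = 1 := by rw [hiZ, hZi, one_mul]
  -- the core similarity identity
  have hTT : T * T = 1 - S * S := by rw [h1]; abel
  have hSiSS : Si * (S * S) = S := by rw [← mul_assoc, hiS, one_mul]
  have hSiTT : Si * (T * T) = Si - S := by rw [hTT, mul_sub, mul_one, hSiSS]
  have hTSiT : T * (Si * T) = S - Si := by
    rw [← mul_assoc, hTSi, neg_mul, mul_assoc, hSiTT, neg_sub]
  have hSiTt : (Si * T) * T = Si - S := by rw [mul_assoc, hSiTT]
  have hcore : (1 - T) * (2 + S + (Si * T - Si)) = (2 - S + (Si * T + Si)) * (1 - T) := by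
    simp only [mul_add, add_mul, mul_sub, sub_mul, mul_one, one_mul]
    simp only [hTS, hTSi, hTSiT, hSiTt]
    noncomm_ring
  have hZiSiT : Zi * (Si * T) = (Si * T) * Zi := by
    rw [← mul_assoc, hZiSi, mul_assoc, hZiT, ← mul_assoc]
  have hZi2 : Zi * (2 : H →L[ℂ] H) = 2 * Zi := by rw [mul_two, two_mul]
  have hcomm2 : Zi * (2 - S + (Si * T + Si)) = (2 - S + (Si * T + Si)) * Zi := by
    calc Zi * (2 - S + (Si * T + Si)) = Zi * 2 - Zi * S + (Zi * (Si * T) + Zi * Si) := by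
          simp only [mul_sub, mul_add]
      _ = 2 * Zi - S * Zi + ((Si * T) * Zi + Si * Zi) := by
          rw [hZi2, hZiS, hZiSiT, hZiSi]
      _ = (2 - S + (Si * T + Si)) * Zi := by simp only [sub_mul, add_mul]
  have hUX : (Zi * (1 - T)) * (2 + S + (Si * T - Si))
      = (2 - S + (Si * T + Si)) * (Zi * (1 - T)) := by
    calc (Zi * (1 - T)) * (2 + S + (Si * T - Si))
        = Zi * ((1 - T) * (2 + S + (Si * T - Si))) := by rw [mul_assoc]
      _ = Zi * ((2 - S + (Si * T + Si)) * (1 - T)) := by rw [hcore]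
      _ = (Zi * (2 - S + (Si * T + Si))) * (1 - T) := by rw [mul_assoc]
      _ = ((2 - S + (Si * T + Si)) * Zi) * (1 - T) := by rw [hcomm2]
      _ = (2 - S + (Si * T + Si)) * (Zi * (1 - T)) := by rw [mul_assoc]
  -- translations of the two sides
  have h2PSi : P * Si + P * Si = 1 - Si * T + Si := by
    have hPP : P + P = S + T + 1 := by rw [hSdef, hTdef]; abel
    calc P * Si + P * Si = (P + P) * Si := (add_mul P P Si).symm
      _ = (S + T + 1) * Si := by rw [hPP]
      _ = S * Si + T * Si + 1 * Si := by rw [add_mul, add_mul]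
      _ = 1 - Si * T + Si := by rw [hSi, hTSi, one_mul]; abel
  have h2PSi' : (P - 1) * Si + (P - 1) * Si = 1 - Si * T - Si := by
    have hPP' : (P - 1) + (P - 1) = S + T - 1 := by rw [hSdef, hTdef]; abel
    calc (P - 1) * Si + (P - 1) * Si = ((P - 1) + (P - 1)) * Si := (add_mul _ _ _).symm
      _ = (S + T - 1) * Si := by rw [hPP']
      _ = S * Si + T * Si - 1 * Si := by rw [sub_mul, add_mul]
      _ = 1 - Si * T - Si := by rw [hSi, hTSi, one_mul]; abel
  have h2lit : (2 : H →L[ℂ] H) = 1 + 1 := by norm_num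
  have hXeq : P + star P + (1 - P * Si + (1 - P * Si)) = 2 + S + (Si * T - Si) := by
    calc P + star P + (1 - P * Si + (1 - P * Si))
        = (P + star P - 1) + (1 + 1 + 1) - (P * Si + P * Si) := by noncomm_ring
      _ = S + (1 + 1 + 1) - (1 - Si * T + Si) := by rw [← hSdef, h2PSi]
      _ = 2 + S + (Si * T - Si) := by rw [h2lit]; noncomm_ring
  have hYeq : 2 - P - star P + (1 - (P - 1) * Si + (1 - (P - 1) * Si))
      = 2 - S + (Si * T + Si) := by
    calc 2 - P - star P + (1 - (P - 1) * Si + (1 - (P - 1) * Si))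
        = 2 + (1 + 1) - (P + star P - 1) - 1 - ((P - 1) * Si + (P - 1) * Si) := by noncomm_ring
      _ = 2 + (1 + 1) - S - 1 - (1 - Si * T - Si) := by rw [← hSdef, h2PSi']
      _ = 2 - S + (Si * T + Si) := by noncomm_ring
  clear_value S T Si Z Zi
  -- the unitary
  refine ⟨Zi * (1 - T), ?_, ?_⟩
  · rw [Unitary.mem_iff]
    exact ⟨by rw [hstarU]; exact hU1, by rw [hstarU]; exact hU2⟩
  · simp only [← star_eq_adjoint]
    rw [hE, hF, hstarU]
    simp only [two_smul]
    rw [hXeq, hYeq]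
    calc 2 + S + (Si * T - Si)
        = (((1 + T) * Zi) * (Zi * (1 - T))) * (2 + S + (Si * T - Si)) := by rw [hU1, one_mul]
      _ = ((1 + T) * Zi) * ((Zi * (1 - T)) * (2 + S + (Si * T - Si))) := by rw [mul_assoc]
      _ = ((1 + T) * Zi) * ((2 - S + (Si * T + Si)) * (Zi * (1 - T))) := by rw [hUX]
      _ = ((1 + T) * Zi) * (2 - S + (Si * T + Si)) * (Zi * (1 - T)) := by
          simp only [mul_assoc]
end

section
/- Let P ∈ B(H) be a bounded idempotent. Then P_{N(2I−P−P*)} = P_{N(P−P*)} − P_{N(P+P*)}; that is, the kernel of P + P* is contained in the kernel of P − P*, and the kernel of 2I − P − P* is the orthogonal complement of N(P+P*) inside N(P−P*). -/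
open ContinuousLinearMap

variable {H : Type*} [NormedAddCommGroup H] [InnerProductSpace ℂ H] [CompleteSpace H]

local notation "⟪" x ", " y "⟫" => @inner ℂ _ _ x y

lemma ker_add_adj_aux (P : H →L[ℂ] H) (hP : P * P = P) (x : H)
    (hx : P x + adjoint P x = 0) : P x = 0 ∧ adjoint P x = 0 := by
  have hx' : adjoint P x = -P x := by
    rw [← neg_eq_of_add_eq_zero_right hx]
  have hPP : ∀ y, P (P y) = P y := fun y => by
    rw [← ContinuousLinearMap.mul_apply, hP]
  have hQmul : adjoint P * adjoint P = adjoint P := by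
    simp only [← star_eq_adjoint, ← star_mul, hP]
  have hQQ : ∀ y, adjoint P (adjoint P y) = adjoint P y := fun y => by
    rw [← ContinuousLinearMap.mul_apply, hQmul]
  have hAP : adjoint P (P x) = P x := by
    have hPx : P x = -(adjoint P x) := by rw [hx', neg_neg]
    rw [hPx, map_neg, hQQ, hx', neg_neg]
  have a1 : ⟪x, P x⟫ = ⟪P x, P x⟫ := by
    conv_lhs => rw [← hAP]
    exact adjoint_inner_right P x (P x)
  have a2 : ⟪x, P x⟫ = -⟪P x, P x⟫ := by
    calc ⟪x, P x⟫ = ⟪x, P (P x)⟫ := by rw [hPP]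
      _ = ⟪adjoint P x, P x⟫ := (adjoint_inner_left P (P x) x).symm
      _ = ⟪-(P x), P x⟫ := by rw [hx']
      _ = -⟪P x, P x⟫ := inner_neg_left _ _
  have h0 : ⟪P x, P x⟫ = 0 := by
    have h := a1.symm.trans a2
    linear_combination h / 2
  have hP0 : P x = 0 := inner_self_eq_zero.mp h0
  exact ⟨hP0, by rw [hx', hP0, neg_zero]⟩

set_option maxHeartbeats 1000000 in
/-- `N(P+P*) ⊆ N(P−P*)`, `N(2I−P−P*)` is the orthogonal complement of `N(P+P*)`
inside `N(P−P*)`, and `P_{N(2I−P−P*)} = P_{N(P−P*)} − P_{N(P+P*)}`. -/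
theorem kerProj_two_sub (P : H →L[ℂ] H) (hP : P * P = P) :
    LinearMap.ker ((P + adjoint P : H →L[ℂ] H) : H →ₗ[ℂ] H) ≤ LinearMap.ker ((P - adjoint P : H →L[ℂ] H) : H →ₗ[ℂ] H) ∧
    LinearMap.ker ((2 - P - adjoint P : H →L[ℂ] H) : H →ₗ[ℂ] H) =
      LinearMap.ker ((P - adjoint P : H →L[ℂ] H) : H →ₗ[ℂ] H) ⊓ (LinearMap.ker ((P + adjoint P : H →L[ℂ] H) : H →ₗ[ℂ] H))ᗮ ∧
    kerProj (2 - P - adjoint P) = kerProj (P - adjoint P) - kerProj (P + adjoint P) := by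
  haveI i1 : CompleteSpace (LinearMap.ker ((P + adjoint P : H →L[ℂ] H) : H →ₗ[ℂ] H)) :=
    (ContinuousLinearMap.isClosed_ker _).completeSpace_coe
  haveI i2 : CompleteSpace (LinearMap.ker ((2 - P - adjoint P : H →L[ℂ] H) : H →ₗ[ℂ] H)) :=
    (ContinuousLinearMap.isClosed_ker _).completeSpace_coe
  haveI i3 : CompleteSpace (LinearMap.ker ((P - adjoint P : H →L[ℂ] H) : H →ₗ[ℂ] H)) :=
    (ContinuousLinearMap.isClosed_ker _).completeSpace_coe
  have hPP : ∀ y, P (P y) = P y := fun y => by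
    rw [← ContinuousLinearMap.mul_apply, hP]
  have hQmul : adjoint P * adjoint P = adjoint P := by
    simp only [← star_eq_adjoint, ← star_mul, hP]
  have hQQ : ∀ y, adjoint P (adjoint P y) = adjoint P y := fun y => by
    rw [← ContinuousLinearMap.mul_apply, hQmul]
  have hQ : (1 - P) * (1 - P) = 1 - P := by
    have h : (1 - P) * (1 - P) = 1 - P - P + P * P := by noncomm_ring
    rw [h, hP]; abel
  have hadj : adjoint (1 - P) = 1 - adjoint P := by
    simp only [← star_eq_adjoint, star_sub, star_one]
  have h2eq : (2 : H →L[ℂ] H) - P - adjoint P = (1 - P) + (1 - adjoint P) := by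
    rw [← one_add_one_eq_two]; abel
  -- membership characterizations
  have mem1 : ∀ x, x ∈ LinearMap.ker ((P + adjoint P : H →L[ℂ] H) : H →ₗ[ℂ] H) ↔ P x = 0 ∧ adjoint P x = 0 := by
    intro x
    constructor
    · intro hx
      exact ker_add_adj_aux P hP x (by simpa using hx)
    · rintro ⟨h1, h2⟩
      simp [LinearMap.mem_ker, h1, h2]
  have mem2 : ∀ x, x ∈ LinearMap.ker ((2 - P - adjoint P : H →L[ℂ] H) : H →ₗ[ℂ] H) ↔ P x = x ∧ adjoint P x = x := by
    intro x
    constructor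
    · intro hx
      have hx0 : ((2 : H →L[ℂ] H) - P - adjoint P) x = 0 := hx
      have hx' : (1 - P) x + adjoint (1 - P) x = 0 := by
        rw [hadj, ← ContinuousLinearMap.add_apply, ← h2eq, hx0]
      obtain ⟨h1, h2⟩ := ker_add_adj_aux (1 - P) hQ x hx'
      rw [hadj] at h2
      simp only [ContinuousLinearMap.sub_apply, ContinuousLinearMap.one_apply,
        sub_eq_zero] at h1 h2
      exact ⟨h1.symm, h2.symm⟩
    · rintro ⟨h1, h2⟩
      have : ((2 : H →L[ℂ] H) - P - adjoint P) x = 0 := by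
        rw [h2eq]
        simp [ContinuousLinearMap.add_apply, ContinuousLinearMap.sub_apply, h1, h2]
      exact this
  have memK : ∀ x, x ∈ LinearMap.ker ((P - adjoint P : H →L[ℂ] H) : H →ₗ[ℂ] H) ↔ P x = adjoint P x := by
    intro x
    have : x ∈ LinearMap.ker ((P - adjoint P : H →L[ℂ] H) : H →ₗ[ℂ] H) ↔ (P - adjoint P) x = 0 := Iff.rfl
    rw [this, ContinuousLinearMap.sub_apply, sub_eq_zero]
  -- orthogonality between ker(P+P†) and fixed vectors
  have horth : ∀ y z : H, (P y = 0 ∧ adjoint P y = 0) → (P z = z ∧ adjoint P z = z) →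
      ⟪y, z⟫ = 0 := by
    rintro y z ⟨hy1, hy2⟩ ⟨hz1, hz2⟩
    calc ⟪y, z⟫ = ⟪y, P z⟫ := by rw [hz1]
      _ = ⟪adjoint P y, z⟫ := (adjoint_inner_left P z y).symm
      _ = 0 := by rw [hy2, inner_zero_left]
  -- decomposition of elements of ker(P - P†)
  have hdec2 : ∀ w, P w = adjoint P w → P (P w) = P w ∧ adjoint P (P w) = P w := by
    intro w hw
    refine ⟨hPP w, ?_⟩
    rw [hw, hQQ, ← hw]
  have hdec1 : ∀ w, P w = adjoint P w →
      P (w - P w) = 0 ∧ adjoint P (w - P w) = 0 := by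
    intro w hw
    constructor
    · rw [map_sub, hPP, sub_self]
    · rw [map_sub, hw, hQQ, sub_self]
  -- Part 1
  have part1 : LinearMap.ker ((P + adjoint P : H →L[ℂ] H) : H →ₗ[ℂ] H) ≤ LinearMap.ker ((P - adjoint P : H →L[ℂ] H) : H →ₗ[ℂ] H) := by
    intro x hx
    obtain ⟨h1, h2⟩ := (mem1 x).mp hx
    rw [memK, h1, h2]
  -- Part 2
  have part2 : LinearMap.ker ((2 - P - adjoint P : H →L[ℂ] H) : H →ₗ[ℂ] H) =
      LinearMap.ker ((P - adjoint P : H →L[ℂ] H) : H →ₗ[ℂ] H) ⊓ (LinearMap.ker ((P + adjoint P : H →L[ℂ] H) : H →ₗ[ℂ] H))ᗮ := by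
    apply le_antisymm
    · intro x hx
      obtain ⟨h1, h2⟩ := (mem2 x).mp hx
      exact ⟨(memK x).mpr (by rw [h1, h2]),
        fun u hu => horth u x ((mem1 u).mp hu) ⟨h1, h2⟩⟩
    · rintro x ⟨hxK, hxO⟩
      have hx' : P x = adjoint P x := (memK x).mp hxK
      have hw1 := hdec1 x hx'
      have hwmem : x - P x ∈ LinearMap.ker ((P + adjoint P : H →L[ℂ] H) : H →ₗ[ℂ] H) := (mem1 _).mpr hw1
      have h1 : ⟪x - P x, x⟫ = 0 := (Submodule.mem_orthogonal _ _).mp hxO _ hwmem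
      have h2 : ⟪x - P x, P x⟫ = 0 := by
        rw [← adjoint_inner_left, hw1.2, inner_zero_left]
      have hww : ⟪x - P x, x - P x⟫ = 0 := by
        rw [inner_sub_right, h1, h2, sub_self]
      have hx0 : x - P x = 0 := inner_self_eq_zero.mp hww
      have hxfix : P x = x := by rw [← sub_eq_zero, ← neg_sub, hx0, neg_zero]
      exact (mem2 x).mpr ⟨hxfix, by rw [← hx', hxfix]⟩
  refine ⟨part1, part2, ?_⟩
  -- Part 3
  ext x
  simp only [kerProj, oproj, ContinuousLinearMap.comp_apply, Submodule.subtypeL_apply,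
    ContinuousLinearMap.sub_apply]
  set a : H := ↑((LinearMap.ker ((2 - P - adjoint P : H →L[ℂ] H) : H →ₗ[ℂ] H)).orthogonalProjectionOnto x) with ha
  set b : H := ↑((LinearMap.ker ((P + adjoint P : H →L[ℂ] H) : H →ₗ[ℂ] H)).orthogonalProjectionOnto x) with hb
  have hamem : a ∈ LinearMap.ker ((2 - P - adjoint P : H →L[ℂ] H) : H →ₗ[ℂ] H) := Submodule.coe_mem _
  have hbmem : b ∈ LinearMap.ker ((P + adjoint P : H →L[ℂ] H) : H →ₗ[ℂ] H) := Submodule.coe_mem _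
  have hafix := (mem2 a).mp hamem
  have hbker := (mem1 b).mp hbmem
  have key : (↑((LinearMap.ker ((P - adjoint P : H →L[ℂ] H) : H →ₗ[ℂ] H)).orthogonalProjectionOnto x) : H) = a + b := by
    rw [Submodule.coe_orthogonalProjectionOnto_apply]
    apply Submodule.eq_starProjection_of_mem_of_inner_eq_zero
    · apply add_mem
      · exact (memK a).mpr (by rw [hafix.1, hafix.2])
      · exact part1 hbmem
    · intro w hw
      have hw' : P w = adjoint P w := (memK w).mp hw
      have hPw := hdec2 w hw'
      have hwP := hdec1 w hw'
      have e1 : ⟪x - (a + b), P w⟫ = 0 := by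
        have exa : ⟪x - a, P w⟫ = 0 := by
          rw [inner_eq_zero_symm]
          exact (Submodule.mem_orthogonal _ _).mp
            (Submodule.sub_starProjection_mem_orthogonal (K := LinearMap.ker ((2 - P - adjoint P : H →L[ℂ] H) : H →ₗ[ℂ] H)) x)
            _ ((mem2 _).mpr hPw)
        have eb : ⟪b, P w⟫ = 0 := horth b (P w) hbker hPw
        calc ⟪x - (a + b), P w⟫ = ⟪x - a, P w⟫ - ⟪b, P w⟫ := by
              rw [← inner_sub_left]
              congr 1
              abel
          _ = 0 := by rw [exa, eb, sub_self]
      have e2 : ⟪x - (a + b), w - P w⟫ = 0 := by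
        have exb : ⟪x - b, w - P w⟫ = 0 := by
          rw [inner_eq_zero_symm]
          exact (Submodule.mem_orthogonal _ _).mp
            (Submodule.sub_starProjection_mem_orthogonal (K := LinearMap.ker ((P + adjoint P : H →L[ℂ] H) : H →ₗ[ℂ] H)) x)
            _ ((mem1 _).mpr hwP)
        have ea : ⟪a, w - P w⟫ = 0 := by
          rw [inner_eq_zero_symm]
          exact horth (w - P w) a hwP hafix
        calc ⟪x - (a + b), w - P w⟫ = ⟪x - b, w - P w⟫ - ⟪a, w - P w⟫ := by
              rw [← inner_sub_left]
              congr 1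
              abel
          _ = 0 := by rw [exb, ea, sub_self]
      calc ⟪x - (a + b), w⟫ = ⟪x - (a + b), P w + (w - P w)⟫ := by
            congr 1
            abel
        _ = ⟪x - (a + b), P w⟫ + ⟪x - (a + b), w - P w⟫ := inner_add_right _ _ _
        _ = 0 := by rw [e1, e2, add_zero]
  rw [key]
  abel
end

section
/- Let P ∈ B(H) be a bounded idempotent. Then P_{(2I−P−P*)^−} + P_{N(2I−P−P*)} = P_{(P+P*)^+}; that is, the orthogonal projection onto the closure of the range of the negative part of 2I − P − P*, plus the orthogonal projection onto the kernel of 2I − P − P*, equals the orthogonal projection onto the closure of the range of the positive part of P + P*. -/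
open ContinuousLinearMap
open scoped ComplexInnerProductSpace

variable {H : Type*} [NormedAddCommGroup H] [InnerProductSpace ℂ H] [CompleteSpace H]

/-- The absolute value `|A| = (A*A)^{1/2}` of an operator. -/
noncomputable def absOp (A : H →L[ℂ] H) : H →L[ℂ] H := CFC.sqrt (adjoint A * A)

/-- The positive part `A⁺ = (|A| + A)/2` of a self-adjoint operator. -/
noncomputable def posPartOp (A : H →L[ℂ] H) : H →L[ℂ] H := (2 : ℂ)⁻¹ • (absOp A + A)

/-- The negative part `A⁻ = (|A| − A)/2` of a self-adjoint operator. -/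
noncomputable def negPartOp (A : H →L[ℂ] H) : H →L[ℂ] H := (2 : ℂ)⁻¹ • (absOp A - A)

/-! ### Auxiliary real functions -/

/-- positive part function -/
noncomputable def fpAux (t : ℝ) : ℝ := (|t| + t) / 2

/-- negative part of `2 - t` -/
noncomputable def gmAux (t : ℝ) : ℝ := (|2 - t| - (2 - t)) / 2

/-- continuous surrogate for the indicator of `[2, ∞)` -/
noncomputable def hhAux (t : ℝ) : ℝ := min (max (t - 1) 0) 1

/-- multiplier witnessing `gmAux = fpAux * mmAux` -/
noncomputable def mmAux (t : ℝ) : ℝ := gmAux t / max t 1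

/-- multiplier witnessing `fpAux t = 2 + qqAux t * (2 - t)` -/
noncomputable def qqAux (t : ℝ) : ℝ := -2 / (2 - min t 0)

/-- an "inverse" of `2 - t` for `t ≤ 1` -/
noncomputable def nnAux (t : ℝ) : ℝ := (max (2 - t) 1)⁻¹

/-- multiplier witnessing `(2 - t) * nnAux t - 1 = -(psiAux t * fpAux t)` -/
noncomputable def psiAux (t : ℝ) : ℝ := max (t - 1) 0 / max t 1

lemma fpAux_cont : Continuous fpAux := by unfold fpAux; fun_prop

lemma gmAux_cont : Continuous gmAux := by unfold gmAux; fun_prop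

lemma hhAux_cont : Continuous hhAux := by unfold hhAux; fun_prop

lemma max_one_pos (t : ℝ) : (0:ℝ) < max t 1 := lt_of_lt_of_le one_pos (le_max_right t 1)

lemma mmAux_cont : Continuous mmAux := by
  unfold mmAux
  exact gmAux_cont.div (by fun_prop) fun t => (max_one_pos t).ne'

lemma qqAux_cont : Continuous qqAux := by
  unfold qqAux
  refine continuous_const.div (by fun_prop) fun t => ?_
  have : min t 0 ≤ 0 := min_le_right t 0
  intro hc
  linarith

lemma nnAux_cont : Continuous nnAux := by
  unfold nnAux
  refine (Continuous.max (by fun_prop) continuous_const).inv₀ fun t => ?_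
  exact (lt_of_lt_of_le one_pos (le_max_right _ 1)).ne'

lemma psiAux_cont : Continuous psiAux := by
  unfold psiAux
  exact (by fun_prop : Continuous fun t : ℝ => max (t-1) 0).div (by fun_prop)
    fun t => (max_one_pos t).ne'

lemma gmAux_eq (t : ℝ) : gmAux t = max (t - 2) 0 := by
  unfold gmAux
  rcases le_total t 2 with h | h
  · rw [abs_of_nonneg (by linarith), max_eq_right (by linarith)]; ring
  · rw [abs_of_nonpos (by linarith), max_eq_left (by linarith)]; ring

lemma fpAux_eq (t : ℝ) : fpAux t = max t 0 := by
  unfold fpAux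
  rcases le_total t 0 with h | h
  · rw [abs_of_nonpos h, max_eq_right h]; ring
  · rw [abs_of_nonneg h, max_eq_left h]; ring

lemma F1 (t : ℝ) : fpAux t * mmAux t = gmAux t := by
  unfold mmAux
  rcases le_total t 2 with h | h
  · rw [gmAux_eq, max_eq_right (by linarith)]; simp
  · rw [fpAux_eq, gmAux_eq, max_eq_left (by linarith : (0:ℝ) ≤ t - 2),
      max_eq_left (by linarith : (1:ℝ) ≤ t), max_eq_left (by linarith : (0:ℝ) ≤ t)]
    field_simp

lemma F2 (t : ℝ) : fpAux t = 2 + qqAux t * (2 - t) := by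
  unfold qqAux
  rcases le_total t 0 with h | h
  · rw [fpAux_eq, max_eq_right h, min_eq_left h]
    have h2 : (2:ℝ) - t ≠ 0 := by linarith
    field_simp
    ring
  · rw [fpAux_eq, max_eq_left h, min_eq_right h]
    norm_num

lemma F3 {t : ℝ} (ht : t ≤ 0 ∨ 2 ≤ t) : hhAux t * (2 - t) = -(gmAux t) := by
  unfold hhAux
  rw [gmAux_eq]
  rcases ht with h | h
  · rw [max_eq_right (by linarith : t - 1 ≤ 0), max_eq_right (by linarith : t - 2 ≤ 0)]
    simp
  · rw [max_eq_left (by linarith : (0:ℝ) ≤ t - 1), min_eq_right (by linarith : (1:ℝ) ≤ t - 1),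
      max_eq_left (by linarith : (0:ℝ) ≤ t - 2)]
    ring

lemma F4 {t : ℝ} (ht : t ≤ 0 ∨ 2 ≤ t) : fpAux t = gmAux t + hhAux t + hhAux t := by
  unfold hhAux
  rw [fpAux_eq, gmAux_eq]
  rcases ht with h | h
  · rw [max_eq_right h, max_eq_right (by linarith : t - 2 ≤ 0),
      max_eq_right (by linarith : t - 1 ≤ 0)]
    simp
  · rw [max_eq_left (by linarith : (0:ℝ) ≤ t), max_eq_left (by linarith : (0:ℝ) ≤ t - 2),
      max_eq_left (by linarith : (0:ℝ) ≤ t - 1), min_eq_right (by linarith : (1:ℝ) ≤ t - 1)]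
    ring

lemma F5 (t : ℝ) : (2 - t) * nnAux t - 1 = -(psiAux t * fpAux t) := by
  unfold nnAux psiAux
  rw [fpAux_eq]
  rcases le_total t 1 with h | h
  · rw [max_eq_left (by linarith : (1:ℝ) ≤ 2 - t), max_eq_right (by linarith : t - 1 ≤ 0)]
    have h2 : (2:ℝ) - t ≠ 0 := by linarith
    field_simp
    ring
  · rw [max_eq_right (by linarith : 2 - t ≤ 1), max_eq_left (by linarith : (0:ℝ) ≤ t - 1),
      max_eq_left (by linarith : (1:ℝ) ≤ t), max_eq_left (by linarith : (0:ℝ) ≤ t)]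
    field_simp
    ring

/-! ### Operator lemmas -/

set_option maxHeartbeats 1000000
set_option synthInstance.maxHeartbeats 200000

lemma absOp_mul_self (T : H →L[ℂ] H) : absOp T * absOp T = adjoint T * T := by
  unfold absOp
  refine CFC.sqrt_mul_sqrt_self (A := H →L[ℂ] H) _ ?_
  rw [← star_eq_adjoint]
  exact star_mul_self_nonneg T

lemma absOp_nonneg (T : H →L[ℂ] H) : 0 ≤ absOp T := CFC.sqrt_nonneg (A := H →L[ℂ] H) _

lemma absOp_selfAdjoint (T : H →L[ℂ] H) : IsSelfAdjoint (absOp T) :=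
  (absOp_nonneg T).isSelfAdjoint

lemma absOp_apply_eq_zero {T : H →L[ℂ] H} {x : H} (hx : T x = 0) : absOp T x = 0 := by
  have key : absOp T (absOp T x) = 0 := by
    have h2 : absOp T (absOp T x) = (absOp T * absOp T) x := rfl
    rw [h2, absOp_mul_self T]
    show adjoint T (T x) = 0
    rw [hx, map_zero]
  have h3 := ContinuousLinearMap.adjoint_inner_left (𝕜 := ℂ) (absOp T) x (absOp T x)
  rw [(absOp_selfAdjoint T).adjoint_eq, key, inner_zero_left] at h3
  exact inner_self_eq_zero.mp h3.symm

lemma absOp_eq_cfc {T : H →L[ℂ] H} (hT : IsSelfAdjoint T) :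
    absOp T = cfc (fun t : ℝ => |t|) T := by
  unfold absOp
  rw [hT.adjoint_eq]
  refine CFC.sqrt_unique ?_ (cfc_nonneg fun t _ => abs_nonneg t)
  rw [← cfc_mul _ _ T]
  calc cfc (fun t : ℝ => |t| * |t|) T = cfc (fun t : ℝ => t * t) T :=
        cfc_congr fun t _ => abs_mul_abs_self t
    _ = T * T := by rw [cfc_mul _ _ T, cfc_id' ℝ T]

lemma half_smul (X : H →L[ℂ] H) : (2 : ℂ)⁻¹ • X = (2⁻¹ : ℝ) • X := by
  rw [show ((2:ℂ))⁻¹ = (((2⁻¹ : ℝ) : ℂ)) by norm_num]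
  exact algebraMap_smul ℂ (2⁻¹ : ℝ) X

lemma closure_orth (K : Submodule ℂ H) : (K.topologicalClosure)ᗮ = Kᗮ := by
  rw [← K.orthogonal_orthogonal_eq_closure, K.triorthogonal_eq_orthogonal]

/-- `P_{(2I−P−P*)⁻} + P_{N(2I−P−P*)} = P_{(P+P*)⁺}` for a bounded idempotent `P`. -/
theorem rangeProj_negPart_two_sub (P : H →L[ℂ] H) (hP : P * P = P) :
    rangeProj (negPartOp (2 - P - adjoint P)) + kerProj (2 - P - adjoint P) =
      rangeProj (posPartOp (P + adjoint P)) := by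
  have hA : IsSelfAdjoint (P + adjoint P) := by
    rw [IsSelfAdjoint, star_add, star_eq_adjoint, star_eq_adjoint, adjoint_adjoint, add_comm]
  set A := P + adjoint P with hAdef
  have hB2 : (2 : H →L[ℂ] H) - P - adjoint P = 2 - A := by rw [hAdef, sub_sub]
  have hBsa : IsSelfAdjoint ((2 : H →L[ℂ] H) - A) := by
    have h2 : IsSelfAdjoint (2 : H →L[ℂ] H) := by rw [IsSelfAdjoint]; simp
    exact h2.sub hA
  -- spectrum of A avoids (0, 2)
  have hP' : adjoint P * adjoint P = adjoint P := by
    rw [← star_eq_adjoint, ← star_mul, hP]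
  have hNN : (0 : H →L[ℂ] H) ≤ (P - adjoint P) * (adjoint P - P) := by
    have h := star_mul_self_nonneg (adjoint P - P)
    rwa [star_sub, star_eq_adjoint, star_eq_adjoint, adjoint_adjoint] at h
  have hC : A * A - 2 * A = (P - adjoint P) * (adjoint P - P) := by
    rw [hAdef]
    simp only [mul_add, add_mul, mul_sub, sub_mul, hP, hP', two_mul]
    abel
  have hspec : ∀ t ∈ spectrum ℝ A, t ≤ 0 ∨ 2 ≤ t := by
    intro t ht
    have hcfc : cfc (fun s : ℝ => s * s - 2 * s) A = A * A - 2 * A := by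
      rw [cfc_sub (fun s : ℝ => s * s) (fun s : ℝ => 2 * s) A, cfc_mul _ _ A, cfc_id' ℝ A,
        cfc_const_mul 2 (fun s : ℝ => s) A, cfc_id' ℝ A]
      congr 1
      rw [Algebra.smul_def, map_ofNat]
    have hmem : t * t - 2 * t ∈ spectrum ℝ (A * A - 2 * A) := by
      rw [← hcfc, cfc_map_spectrum (fun s : ℝ => s * s - 2 * s) A]
      exact ⟨t, ht, rfl⟩
    have hpos : (0:ℝ) ≤ t * t - 2 * t :=
      spectrum_nonneg_of_nonneg hNN (hC ▸ hmem)
    rcases le_or_gt t 0 with h | h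
    · exact Or.inl h
    · right; nlinarith
  -- operator identities via cfc
  have cfcmul : ∀ (f g : ℝ → ℝ), Continuous f → Continuous g →
      cfc f A * cfc g A = cfc (fun t => f t * g t) A := fun f g hf hg =>
    (cfc_mul f g A hf.continuousOn hg.continuousOn).symm
  have hS : posPartOp A = cfc fpAux A := by
    rw [posPartOp, absOp_eq_cfc hA, half_smul]
    have hadd : cfc (fun t : ℝ => |t| + t) A = cfc (fun t : ℝ => |t|) A + A := by
      rw [cfc_add A (fun t : ℝ => |t|) (fun t : ℝ => t), cfc_id' ℝ A]
    rw [← hadd]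
    rw [← cfc_const_mul (2⁻¹:ℝ) (fun t : ℝ => |t| + t) A]
    exact cfc_congr fun t _ => by unfold fpAux; ring
  have hBcfc : (2 : H →L[ℂ] H) - A = cfc (fun t : ℝ => 2 - t) A := by
    rw [cfc_sub (fun _ : ℝ => (2:ℝ)) (fun t : ℝ => t) A, cfc_const (2:ℝ) A, cfc_id' ℝ A,
      map_ofNat]
  have hG : negPartOp ((2 : H →L[ℂ] H) - A) = cfc gmAux A := by
    rw [negPartOp, absOp_eq_cfc hBsa, half_smul]
    have habs2 : cfc (fun t : ℝ => |t|) ((2 : H →L[ℂ] H) - A) = cfc (fun t : ℝ => |2 - t|) A := by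
      rw [hBcfc, ← cfc_comp' (fun t : ℝ => |t|) (fun t : ℝ => 2 - t) A]
    rw [habs2]
    conv_lhs => rw [hBcfc]
    rw [← cfc_sub (fun t : ℝ => |2 - t|) (fun t : ℝ => 2 - t) A,
      ← cfc_const_mul (2⁻¹:ℝ) (fun t : ℝ => |2 - t| - (2 - t)) A]
    exact cfc_congr fun t _ => by unfold gmAux; ring
  set S := cfc fpAux A with hSdef
  set G := cfc gmAux A with hGdef
  set Q := cfc hhAux A with hQdef
  have hSsa : IsSelfAdjoint S := cfc_predicate fpAux A
  have hGsa : IsSelfAdjoint G := cfc_predicate gmAux A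
  have hQsa : IsSelfAdjoint Q := cfc_predicate hhAux A
  have hGm : G = S * cfc mmAux A := by
    rw [hSdef, hGdef, cfcmul fpAux mmAux fpAux_cont mmAux_cont]
    exact cfc_congr fun t _ => (F1 t).symm
  have hBQ : ((2:H →L[ℂ] H) - A) * Q = -G := by
    rw [hQdef, hGdef, hBcfc, cfcmul _ hhAux (by fun_prop) hhAux_cont, ← cfc_neg gmAux A]
    exact cfc_congr fun t ht => by rw [mul_comm]; exact F3 (hspec t ht)
  have hGQ : G * Q = Q * G := by
    rw [hGdef, hQdef, cfcmul gmAux hhAux gmAux_cont hhAux_cont,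
      cfcmul hhAux gmAux hhAux_cont gmAux_cont]
    exact cfc_congr fun t _ => mul_comm _ _
  have hSGQ : S = G + Q + Q := by
    rw [hSdef, hGdef, hQdef,
      show cfc gmAux A + cfc hhAux A + cfc hhAux A
          = cfc (fun t => gmAux t + hhAux t + hhAux t) A by
        rw [cfc_add A (fun t => gmAux t + hhAux t) hhAux
            ((gmAux_cont.add hhAux_cont).continuousOn) hhAux_cont.continuousOn,
          cfc_add A gmAux hhAux gmAux_cont.continuousOn hhAux_cont.continuousOn]]
    exact cfc_congr fun t ht => F4 (hspec t ht)
  have hSq2 : S = 2 + cfc qqAux A * ((2:H →L[ℂ] H) - A) := by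
    conv_rhs => rw [hBcfc]
    rw [cfcmul qqAux _ qqAux_cont (by fun_prop),
      show (2:H →L[ℂ] H) = cfc (fun _ : ℝ => (2:ℝ)) A by rw [cfc_const (2:ℝ) A, map_ofNat],
      ← cfc_add A (fun _ : ℝ => (2:ℝ)) (fun t => qqAux t * (2 - t)) continuousOn_const
        ((qqAux_cont.mul (by fun_prop)).continuousOn)]
    exact cfc_congr fun t _ => F2 t
  have hkerG : ∀ x, ((2:H →L[ℂ] H) - A) x = 0 → G x = 0 := by
    intro x hx
    rw [← hG]
    simp [negPartOp, ContinuousLinearMap.smul_apply, ContinuousLinearMap.sub_apply,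
      absOp_apply_eq_zero hx, hx]
  -- rewrite the goal
  rw [hB2, hG, hS]
  set MG := (LinearMap.range (G : H →ₗ[ℂ] H)).topologicalClosure with hMGdef
  set MS := (LinearMap.range (S : H →ₗ[ℂ] H)).topologicalClosure with hMSdef
  set NB := LinearMap.ker (((2:H →L[ℂ] H) - A) : H →ₗ[ℂ] H) with hNBdef
  haveI : CompleteSpace MG := (Submodule.isClosed_topologicalClosure _).completeSpace_coe
  haveI : CompleteSpace MS := (Submodule.isClosed_topologicalClosure _).completeSpace_coe
  haveI : CompleteSpace NB := (ContinuousLinearMap.isClosed_ker ((2:H →L[ℂ] H) - A)).completeSpace_coe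
  have hMGorth : MGᗮ = (LinearMap.range (G : H →ₗ[ℂ] H))ᗮ := closure_orth _
  have hMSorth : MSᗮ = (LinearMap.range (S : H →ₗ[ℂ] H))ᗮ := closure_orth _
  have hNBleMGo : NB ≤ MGᗮ := by
    intro w hw
    rw [hMGorth, Submodule.mem_orthogonal]
    rintro u hu
    obtain ⟨y, rfl⟩ := hu
    have h1 : ⟪G y, w⟫ = ⟪y, G w⟫ := by
      conv_lhs => rw [← hGsa.adjoint_eq]
      exact ContinuousLinearMap.adjoint_inner_left G w y
    change ⟪G y, w⟫ = 0
    rw [h1, hkerG w hw, inner_zero_right]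
  have hMGleNBo : MG ≤ NBᗮ :=
    le_trans (Submodule.le_orthogonal_orthogonal MG) (Submodule.orthogonal_le hNBleMGo)
  have hMGleMS : MG ≤ MS := by
    refine Submodule.topologicalClosure_mono ?_
    rintro u ⟨y, rfl⟩
    exact ⟨cfc mmAux A y, by rw [hGm]; rfl⟩
  have hNBleMS : NB ≤ MS := by
    intro w hw
    have hw0 : ((2:H →L[ℂ] H) - A) w = 0 := hw
    have hSw : S w = (2:H →L[ℂ] H) w := by
      rw [hSq2]
      simp [ContinuousLinearMap.add_apply, ContinuousLinearMap.mul_apply, hw0]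
    have h2w : (2:H →L[ℂ] H) w = (2:ℂ) • w := by
      rw [show (2:H →L[ℂ] H) = (2:ℂ) • (1:H →L[ℂ] H) by
          rw [Algebra.smul_def, map_ofNat, mul_one],
        ContinuousLinearMap.smul_apply, ContinuousLinearMap.one_apply]
    have hfix : S ((2:ℂ)⁻¹ • w) = w := by
      rw [map_smul, hSw, h2w, smul_smul, inv_mul_cancel₀ two_ne_zero, one_smul]
    exact Submodule.le_topologicalClosure _ ⟨_, hfix⟩
  ext x
  simp only [ContinuousLinearMap.add_apply, rangeProj, kerProj, oproj,
    ContinuousLinearMap.coe_comp', Function.comp_apply, Submodule.subtypeL_apply]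
  refine (Submodule.eq_starProjection_of_mem_orthogonal ?_ ?_).symm
  · exact MS.add_mem (hMGleMS (MG.orthogonalProjectionOnto x).2) (hNBleMS (NB.orthogonalProjectionOnto x).2)
  · set z := x - (↑(MG.orthogonalProjectionOnto x) + ↑(NB.orthogonalProjectionOnto x) : H) with hzdef
    have hz1 : z ∈ MGᗮ := by
      have h1 := Submodule.sub_starProjection_mem_orthogonal (K := MG) x
      have h2 : (↑(NB.orthogonalProjectionOnto x) : H) ∈ MGᗮ := hNBleMGo (NB.orthogonalProjectionOnto x).2
      have hzz : z = (x - ↑(MG.orthogonalProjectionOnto x)) - ↑(NB.orthogonalProjectionOnto x) := by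
        rw [hzdef]; abel
      rw [hzz]; exact Submodule.sub_mem _ h1 h2
    have hz2 : z ∈ NBᗮ := by
      have h1 := Submodule.sub_starProjection_mem_orthogonal (K := NB) x
      have h2 : (↑(MG.orthogonalProjectionOnto x) : H) ∈ NBᗮ := hMGleNBo (MG.orthogonalProjectionOnto x).2
      have hzz : z = (x - ↑(NB.orthogonalProjectionOnto x)) - ↑(MG.orthogonalProjectionOnto x) := by
        rw [hzdef]; abel
      rw [hzz]; exact Submodule.sub_mem _ h1 h2
    have hGz : G z = 0 := by
      rw [hMGorth] at hz1
      have h1 := (Submodule.mem_orthogonal _ z).mp hz1 (G (G z)) ⟨G z, rfl⟩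
      have h2 := ContinuousLinearMap.adjoint_inner_left G z (G z)
      rw [hGsa.adjoint_eq] at h2
      rw [h2] at h1
      exact inner_self_eq_zero.mp h1
    have hQker : ∀ y, G y = 0 → ((2:H →L[ℂ] H) - A) (Q y) = 0 := by
      intro y hy
      have h0 : ((2:H →L[ℂ] H) - A) (Q y) = (((2:H →L[ℂ] H) - A) * Q) y := rfl
      rw [h0, hBQ]
      simp [hy]
    have hQz : Q z = 0 := by
      have hmem : Q (Q z) ∈ NB := by
        show ((2:H →L[ℂ] H) - A) (Q (Q z)) = 0
        apply hQker
        have h0 : G (Q z) = (G * Q) z := rfl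
        rw [h0, hGQ]
        show Q (G z) = 0
        rw [hGz, map_zero]
      have h1 := (Submodule.mem_orthogonal _ z).mp hz2 (Q (Q z)) hmem
      have h2 := ContinuousLinearMap.adjoint_inner_left Q z (Q z)
      rw [hQsa.adjoint_eq] at h2
      rw [h2] at h1
      exact inner_self_eq_zero.mp h1
    have hSz : S z = 0 := by
      rw [hSGQ]
      simp [ContinuousLinearMap.add_apply, hGz, hQz]
    rw [hMSorth, Submodule.mem_orthogonal]
    rintro u ⟨y, rfl⟩
    have h1 : ⟪S y, z⟫ = ⟪y, S z⟫ := by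
      conv_lhs => rw [← hSsa.adjoint_eq]
      exact ContinuousLinearMap.adjoint_inner_left S z y
    change ⟪S y, z⟫ = 0
    rw [h1, hSz, inner_zero_right]
end
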